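/- For any X ∈ 𝕆^{n×k} and Y ∈ 𝕆^{m×k}, there exist orthogonal matrices U, V ∈ 𝕆^{k×k} such that (XU)ᵀ C (YV) is symmetric positive semidefinite and F(XU, YV) ≥ F(X, Y). -/

import Mathlib

open Matrix

/-- The OCCA objective
`F(X, Y) = tr(XᵀCY)² / (tr(XᵀAX) · tr(YᵀBY))` with `A = S₁S₁ᵀ`, `B = S₂S₂ᵀ`, `C = S₁S₂ᵀ`. -/
noncomputable def Fobj {n m k q : ℕ}
    (S₁ : Matrix (Fin n) (Fin q) ℝ) (S₂ : Matrix (Fin m) (Fin q) ℝ)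
    (X : Matrix (Fin n) (Fin k) ℝ) (Y : Matrix (Fin m) (Fin k) ℝ) : ℝ :=
  (Matrix.trace (Xᵀ * (S₁ * S₂ᵀ) * Y)) ^ 2 /
    (Matrix.trace (Xᵀ * (S₁ * S₁ᵀ) * X) * Matrix.trace (Yᵀ * (S₂ * S₂ᵀ) * Y))

open scoped RealInnerProductSpace MatrixOrder in
lemma exists_polar_aux {k : ℕ} (M : Matrix (Fin k) (Fin k) ℝ) :
    ∃ U : Matrix (Fin k) (Fin k) ℝ, Uᵀ * U = 1 ∧ (Uᵀ * M).PosSemidef ∧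
      M.trace ^ 2 ≤ ((Uᵀ * M).trace) ^ 2 := by
  classical
  have hMM : (Mᵀ * M).PosSemidef := by
    simpa [Matrix.conjTranspose_eq_transpose_of_trivial] using
      Matrix.posSemidef_conjTranspose_mul_self M
  set P := CFC.sqrt (Mᵀ * M) with hPdef
  have hP : P.PosSemidef := (CFC.sqrt_nonneg _).posSemidef
  have hPP : P * P = Mᵀ * M := CFC.sqrt_mul_sqrt_self _ hMM.nonneg
  have hPsymm : Pᵀ = P := by
    have := hP.isHermitian
    rwa [Matrix.IsHermitian, Matrix.conjTranspose_eq_transpose_of_trivial] at this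
  have key : ∀ (A : Matrix (Fin k) (Fin k) ℝ) (x : Fin k → ℝ),
      x ⬝ᵥ ((Aᵀ * A) *ᵥ x) = (A *ᵥ x) ⬝ᵥ (A *ᵥ x) := by
    intro A x
    rw [← Matrix.mulVec_mulVec, Matrix.dotProduct_mulVec, Matrix.vecMul_transpose]
  have hdot : ∀ x : Fin k → ℝ, (P *ᵥ x) ⬝ᵥ (P *ᵥ x) = (M *ᵥ x) ⬝ᵥ (M *ᵥ x) := by
    intro x
    rw [← key P x, ← key M x, hPsymm, hPP]
  -- Euclidean linear maps
  set p : EuclideanSpace ℝ (Fin k) →ₗ[ℝ] EuclideanSpace ℝ (Fin k) := Matrix.toEuclideanLin P with hp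
  set f : EuclideanSpace ℝ (Fin k) →ₗ[ℝ] EuclideanSpace ℝ (Fin k) := Matrix.toEuclideanLin M with hf
  have happ : ∀ (A : Matrix (Fin k) (Fin k) ℝ) (x : EuclideanSpace ℝ (Fin k)) (i : Fin k),
      (Matrix.toEuclideanLin A x) i = (A *ᵥ (WithLp.equiv 2 (Fin k → ℝ) x)) i := fun _ _ _ => rfl
  have hnorm : ∀ x : EuclideanSpace ℝ (Fin k), ‖p x‖ = ‖f x‖ := by
    intro x
    rw [EuclideanSpace.norm_eq, EuclideanSpace.norm_eq]
    congr 1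
    have := hdot (WithLp.equiv 2 (Fin k → ℝ) x)
    simpa [hp, hf, happ, dotProduct, Real.norm_eq_abs, sq_abs, pow_two] using this
  have hker : LinearMap.ker p ≤ LinearMap.ker f := by
    intro x hx
    have h0 : ‖f x‖ = 0 := by rw [← hnorm, LinearMap.mem_ker.mp hx, norm_zero]
    simpa [LinearMap.mem_ker] using norm_eq_zero.mp h0
  set e := p.quotKerEquivRange with he
  set g : (EuclideanSpace ℝ (Fin k) ⧸ LinearMap.ker p) →ₗ[ℝ] EuclideanSpace ℝ (Fin k) :=
    (LinearMap.ker p).liftQ f hker with hg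
  set L0 : LinearMap.range p →ₗ[ℝ] EuclideanSpace ℝ (Fin k) := g ∘ₗ e.symm.toLinearMap with hL0def
  have hL0 : ∀ x : EuclideanSpace ℝ (Fin k),
      L0 ⟨p x, LinearMap.mem_range_self p x⟩ = f x := by
    intro x
    have h1 : e.symm ⟨p x, LinearMap.mem_range_self p x⟩ = Submodule.Quotient.mk x := by
      rw [he]
      exact (p.quotKerEquivRange_symm_apply_image x
        (LinearMap.mem_range_self p x)).trans (Submodule.mkQ_apply _ x)
    simp [hL0def, h1, hg, Submodule.liftQ_apply]
  have hL0norm : ∀ y : LinearMap.range p, ‖L0 y‖ = ‖y‖ := by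
    rintro ⟨y, x, rfl⟩
    rw [show (⟨p x, ⟨x, rfl⟩⟩ : LinearMap.range p) = ⟨p x, LinearMap.mem_range_self p x⟩ from rfl,
      hL0 x]
    rw [Submodule.coe_norm, ← hnorm]
  set L : (LinearMap.range p) →ₗᵢ[ℝ] EuclideanSpace ℝ (Fin k) := ⟨L0, hL0norm⟩ with hL
  set O := L.extend with hOdef
  have hO : ∀ x : EuclideanSpace ℝ (Fin k), O (p x) = f x := by
    intro x
    have h2 := L.extend_apply ⟨p x, LinearMap.mem_range_self p x⟩
    rw [hL] at h2
    simpa [hL0 x] using h2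
  set U : Matrix (Fin k) (Fin k) ℝ := Matrix.toEuclideanLin.symm O.toLinearMap with hUdef
  have hU : Matrix.toEuclideanLin U = O.toLinearMap := by
    rw [hUdef]; exact LinearEquiv.apply_symm_apply _ _
  have hUP : U * P = M := by
    apply Matrix.toEuclideanLin.injective
    apply LinearMap.ext
    intro x
    have h2 : Matrix.toEuclideanLin (U * P) x
        = Matrix.toEuclideanLin U (Matrix.toEuclideanLin P x) := by
      simp [Matrix.toEuclideanLin_apply, Matrix.mulVec_mulVec]
    rw [h2, hU]
    exact hO x
  have hcol : ∀ (i l : Fin k), (O (EuclideanSpace.single i (1:ℝ))) l = U l i := by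
    intro i l
    have h3 : O (EuclideanSpace.single i (1:ℝ))
        = Matrix.toEuclideanLin U (EuclideanSpace.single i (1:ℝ)) := by rw [hU]; rfl
    rw [h3, happ]
    show (U *ᵥ (Pi.single i 1)) l = U l i
    simp [Matrix.mulVec, dotProduct, Pi.single_apply]
  have hUO : Uᵀ * U = 1 := by
    ext i j
    have h4 := O.inner_map_map (EuclideanSpace.single i (1:ℝ)) (EuclideanSpace.single j 1)
    have h5a : ⟪O (EuclideanSpace.single i (1:ℝ)), O (EuclideanSpace.single j 1)⟫
          = ∑ l, U l i * U l j := by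
      rw [PiLp.inner_apply]
      simp only [RCLike.inner_apply, conj_trivial, hcol]
      exact Finset.sum_congr rfl fun l _ => mul_comm _ _
    have h5b : ⟪(EuclideanSpace.single i (1:ℝ)), (EuclideanSpace.single j (1:ℝ))⟫
          = if j = i then (1:ℝ) else 0 := by
      simp [EuclideanSpace.inner_single_left, EuclideanSpace.single_apply]
      exact if_congr eq_comm rfl rfl
    have h5 : ∑ l, U l i * U l j = if j = i then (1:ℝ) else 0 :=
      h5a.symm.trans (h4.trans h5b)
    simp only [Matrix.mul_apply, Matrix.transpose_apply, Matrix.one_apply]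
    rw [h5]
    simp [eq_comm]
  have hUM : Uᵀ * M = P := by
    rw [← hUP, ← Matrix.mul_assoc, hUO, Matrix.one_mul]
  refine ⟨U, hUO, hUM ▸ hP, ?_⟩
  set R := CFC.sqrt P with hRdef
  have hRpsd : R.PosSemidef := (CFC.sqrt_nonneg _).posSemidef
  have hRR : R * R = P := CFC.sqrt_mul_sqrt_self _ hP.nonneg
  have hRT : Rᵀ = R := by
    have h6 := hRpsd.isHermitian
    rwa [Matrix.IsHermitian, Matrix.conjTranspose_eq_transpose_of_trivial] at h6
  have hRsymm : ∀ a b, R a b = R b a := fun a b => congrFun (congrFun hRT.symm a) b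
  have cs := Finset.sum_mul_sq_le_sq_mul_sq Finset.univ
    (fun z : Fin k × Fin k => R z.1 z.2) (fun z : Fin k × Fin k => (U * R) z.2 z.1)
  have e1 : ∑ z : Fin k × Fin k, R z.1 z.2 * (U * R) z.2 z.1 = M.trace := by
    rw [Fintype.sum_prod_type, ← hUP, ← hRR, ← Matrix.mul_assoc, Matrix.trace_mul_comm]
    simp only [Matrix.trace, Matrix.diag, Matrix.mul_apply]
  have e2 : ∑ z : Fin k × Fin k, (R z.1 z.2) ^ 2 = P.trace := by
    rw [Fintype.sum_prod_type, ← hRR]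
    simp only [Matrix.trace, Matrix.diag, Matrix.mul_apply, pow_two]
    refine Finset.sum_congr rfl fun a _ => Finset.sum_congr rfl fun b _ => ?_
    rw [hRsymm b a]
  have e3 : ∑ z : Fin k × Fin k, ((U * R) z.2 z.1) ^ 2 = P.trace := by
    have hW : (U * R)ᵀ * (U * R) = P := by
      rw [Matrix.transpose_mul, Matrix.mul_assoc, ← Matrix.mul_assoc Uᵀ U R, hUO,
        Matrix.one_mul, hRT, hRR]
    rw [Fintype.sum_prod_type, ← hW]
    simp only [Matrix.trace, Matrix.diag, Matrix.mul_apply, Matrix.transpose_apply, pow_two]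
  rw [e1, e2, e3] at cs
  rw [hUM]
  calc M.trace ^ 2 ≤ P.trace * P.trace := cs
    _ = P.trace ^ 2 := (pow_two _).symm
lemma trace_pos_of_posDef_aux {k : ℕ} (hk : 1 ≤ k) {M : Matrix (Fin k) (Fin k) ℝ}
    (h : M.PosDef) : 0 < M.trace := by
  have hdiag : ∀ i, 0 < M i i := by
    intro i
    have h1 := h.dotProduct_mulVec_pos (x := Pi.single i 1) (fun hz => by
      have hzz := congrFun hz i
      rw [Pi.single_eq_same] at hzz
      exact one_ne_zero hzz)
    simpa [dotProduct, Matrix.mulVec, Pi.single_apply] using h1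
  have : Nonempty (Fin k) := ⟨⟨0, hk⟩⟩
  rw [Matrix.trace]
  exact Finset.sum_pos (fun i _ => hdiag i) Finset.univ_nonempty

lemma posDef_conj_aux {n k : ℕ} {A : Matrix (Fin n) (Fin n) ℝ} (hA : A.PosDef)
    {X : Matrix (Fin n) (Fin k) ℝ} (hX : Xᵀ * X = 1) : (Xᵀ * A * X).PosDef := by
  have hAt : Aᵀ = A := by
    have h1 := hA.1
    rwa [Matrix.IsHermitian, Matrix.conjTranspose_eq_transpose_of_trivial] at h1
  refine Matrix.PosDef.of_dotProduct_mulVec_pos ?_ ?_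
  · rw [Matrix.IsHermitian, Matrix.conjTranspose_eq_transpose_of_trivial,
      Matrix.transpose_mul, Matrix.transpose_mul, Matrix.transpose_transpose, hAt,
      Matrix.mul_assoc]
  · intro x hx
    have hXx : X *ᵥ x ≠ 0 := by
      intro h0
      apply hx
      have h1 : (Xᵀ * X) *ᵥ x = Xᵀ *ᵥ (X *ᵥ x) := (Matrix.mulVec_mulVec _ _ _).symm
      rw [hX, h0, Matrix.mulVec_zero, Matrix.one_mulVec] at h1
      exact h1
    have h2 := hA.dotProduct_mulVec_pos hXx
    have h3 : (Xᵀ * A * X) *ᵥ x = Xᵀ *ᵥ (A *ᵥ (X *ᵥ x)) := by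
      rw [← Matrix.mulVec_mulVec, ← Matrix.mulVec_mulVec]
    rw [star_trivial] at h2 ⊢
    rw [h3, Matrix.dotProduct_mulVec, Matrix.vecMul_transpose]
    exact h2

/-- for any `X ∈ 𝕆^{n×k}`, `Y ∈ 𝕆^{m×k}` there are orthogonal `U, V ∈ 𝕆^{k×k}`
such that `(XU)ᵀ C (YV)` is symmetric positive semidefinite and `F(XU, YV) ≥ F(X, Y)`. -/
theorem exists_orthogonal_posSemidef_Fobj_ge
    (n m k q : ℕ) (hk1 : 1 ≤ k) (hkn : k < n) (hkm : k < m)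
    (S₁ : Matrix (Fin n) (Fin q) ℝ) (S₂ : Matrix (Fin m) (Fin q) ℝ)
    (hA : (S₁ * S₁ᵀ).PosDef) (hB : (S₂ * S₂ᵀ).PosDef)
    (X : Matrix (Fin n) (Fin k) ℝ) (Y : Matrix (Fin m) (Fin k) ℝ)
    (hX : Xᵀ * X = 1) (hY : Yᵀ * Y = 1) :
    ∃ U V : Matrix (Fin k) (Fin k) ℝ, Uᵀ * U = 1 ∧ Vᵀ * V = 1 ∧
      ((X * U)ᵀ * (S₁ * S₂ᵀ) * (Y * V)).PosSemidef ∧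
      Fobj S₁ S₂ X Y ≤ Fobj S₁ S₂ (X * U) (Y * V) := by
  obtain ⟨U, hUO, hpsd, htr⟩ := exists_polar_aux (Xᵀ * (S₁ * S₂ᵀ) * Y)
  have hUUT : U * Uᵀ = 1 := mul_eq_one_comm.mp hUO
  have hnum : (X * U)ᵀ * (S₁ * S₂ᵀ) * Y = Uᵀ * (Xᵀ * (S₁ * S₂ᵀ) * Y) := by
    rw [Matrix.transpose_mul]; simp [Matrix.mul_assoc]
  refine ⟨U, 1, hUO, by simp, ?_, ?_⟩
  · rw [Matrix.mul_one, hnum]; exact hpsd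
  · have hDX : Matrix.trace ((X * U)ᵀ * (S₁ * S₁ᵀ) * (X * U))
        = Matrix.trace (Xᵀ * (S₁ * S₁ᵀ) * X) := by
      have h1 : (X * U)ᵀ * (S₁ * S₁ᵀ) * (X * U) = Uᵀ * (Xᵀ * (S₁ * S₁ᵀ) * X) * U := by
        rw [Matrix.transpose_mul]; simp [Matrix.mul_assoc]
      rw [h1, Matrix.trace_mul_cycle, hUUT, Matrix.one_mul]
    have hdX : 0 < Matrix.trace (Xᵀ * (S₁ * S₁ᵀ) * X) :=
      trace_pos_of_posDef_aux hk1 (posDef_conj_aux hA hX)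
    have hdY : 0 < Matrix.trace (Yᵀ * (S₂ * S₂ᵀ) * Y) :=
      trace_pos_of_posDef_aux hk1 (posDef_conj_aux hB hY)
    have hD : 0 < Matrix.trace (Xᵀ * (S₁ * S₁ᵀ) * X) * Matrix.trace (Yᵀ * (S₂ * S₂ᵀ) * Y) :=
      mul_pos hdX hdY
    simp only [Fobj, Matrix.mul_one, hnum, hDX]
    exact (div_le_div_iff_of_pos_right hD).mpr htr
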